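/- Let Ω ⊂ ℂⁿ be a bounded strongly pseudoconvex domain with C² boundary whose defining function ρ is strictly plurisubharmonic on a neighborhood of the closure of Ω, let p ∈ ∂Ω, and let f : Ω → Ω be holomorphic, extending to a C² map on a neighborhood of p in the closure of Ω with f(p) = p. Then the directional derivative of ρ ∘ f at p along the unit outward normal ν_p is strictly positive: dρ_p(df_p(ν_p)) > 0; equivalently, Re⟨J_f(p)ν_p, ν_p⟩ > 0. -/

import Mathlib

open Metric Set Filter

noncomputable section

/-- The Levi form of a real-valued `C²` function `ρ` on `ℂⁿ` at the point `q`
in the direction `v`:  `L_ρ(q,v) = Σ_{j,k} (∂²ρ/∂z_j∂z̄_k)(q) v_j v̄_k`, expressed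
invariantly as `(Hess ρ(q)(v,v) + Hess ρ(q)(iv,iv))/4`. -/
def LeviForm {n : ℕ} (ρ : EuclideanSpace ℂ (Fin n) → ℝ)
    (q v : EuclideanSpace ℂ (Fin n)) : ℝ :=
  (iteratedFDeriv ℝ 2 ρ q ![v, v]
    + iteratedFDeriv ℝ 2 ρ q ![Complex.I • v, Complex.I • v]) / 4



/-- Quantitative Hopf estimate on a disc tangent to 0 for a holomorphic
function with negative real part. -/
lemma halfplane_hopf {H : ℂ → ℂ} {r : ℝ} (hr : 0 < r)
    (hd : DifferentiableOn ℂ H (Metric.ball (r : ℂ) r))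
    (hneg : ∀ ζ ∈ Metric.ball (r : ℂ) r, (H ζ).re < 0) :
    ∀ t : ℝ, t ∈ Set.Ioo 0 r → (H t).re ≤ (H r).re / (4 * r) * t := by
  have hrball : (r : ℂ) ∈ Metric.ball (r : ℂ) r := by simp [hr]
  set m : ℂ := H r with hm
  have ha : m.re < 0 := hneg _ hrball
  -- the Cayley-type transform
  set g : ℂ → ℂ := fun ζ => (H ζ - m) / (H ζ + (starRingEnd ℂ) m) with hg
  have hden : ∀ ζ ∈ Metric.ball (r : ℂ) r, H ζ + (starRingEnd ℂ) m ≠ 0 := by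
    intro ζ hζ h0
    have : (H ζ + (starRingEnd ℂ) m).re < 0 := by
      simp only [Complex.add_re, Complex.conj_re]
      linarith [hneg ζ hζ]
    rw [h0] at this; simp at this
  have hkey : ∀ ζ ∈ Metric.ball (r : ℂ) r,
      Complex.normSq (H ζ - m) = Complex.normSq (H ζ + (starRingEnd ℂ) m)
        - 4 * (H ζ).re * m.re := by
    intro ζ _
    simp only [Complex.normSq_apply, Complex.sub_re, Complex.sub_im, Complex.add_re,
      Complex.add_im, Complex.conj_re, Complex.conj_im]
    ring
  have hgd : DifferentiableOn ℂ g (Metric.ball (r : ℂ) r) := by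
    apply DifferentiableOn.div
    · exact hd.sub (differentiableOn_const _)
    · exact hd.add (differentiableOn_const _)
    · exact hden
  have hgmaps : MapsTo g (Metric.ball (r : ℂ) r) (Metric.ball (0 : ℂ) 1) := by
    intro ζ hζ
    have h1 : Complex.normSq (H ζ - m) < Complex.normSq (H ζ + (starRingEnd ℂ) m) := by
      rw [hkey ζ hζ]
      nlinarith [hneg ζ hζ, ha]
    have h2 : ‖H ζ - m‖ < ‖H ζ + (starRingEnd ℂ) m‖ := by
      rw [← Complex.sq_norm, ← Complex.sq_norm] at h1
      exact lt_of_pow_lt_pow_left₀ 2 (norm_nonneg _) h1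
    simp only [mem_ball, dist_zero_right, hg]
    rw [norm_div]
    have hpos : (0:ℝ) < ‖H ζ + (starRingEnd ℂ) m‖ :=
      (norm_pos_iff.2 (hden ζ hζ))
    rw [div_lt_one hpos]
    exact h2
  have hgr : g r = 0 := by simp [hg, hm]
  intro t ht
  have htball : (t : ℂ) ∈ Metric.ball (r : ℂ) r := by
    simp only [mem_ball]
    rw [Complex.dist_eq]
    have : ((t : ℂ) - r) = ((t - r : ℝ) : ℂ) := by push_cast; ring
    rw [this, Complex.norm_real, Real.norm_eq_abs]
    rw [abs_of_neg (by linarith [ht.2])]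
    linarith [ht.1]
  -- Schwarz lemma
  have hsch := Complex.dist_le_div_mul_dist_of_mapsTo_ball hgd (by rw [hgr]; exact hgmaps.mono_right ball_subset_closedBall) htball
  rw [hgr, dist_zero_right, Complex.dist_eq] at hsch
  have hdist : ‖(t : ℂ) - r‖ = r - t := by
    have : ((t : ℂ) - r) = ((t - r : ℝ) : ℂ) := by push_cast; ring
    rw [this, Complex.norm_real, Real.norm_eq_abs, abs_of_neg (by linarith [ht.2])]
    ring
  rw [hdist] at hsch
  set k : ℝ := (r - t) / r with hk
  have hk1 : k < 1 := by rw [hk, div_lt_one hr]; linarith [ht.1]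
  have hk0 : 0 ≤ k := div_nonneg (by linarith [ht.2]) hr.le
  have hsch' : ‖g t‖ ≤ k := by
    calc ‖g t‖ ≤ 1 / r * (r - t) := hsch
    _ = k := by rw [hk]; field_simp
  -- unpack: |H t - m| ≤ k * |H t + conj m|
  set w : ℂ := H t with hw
  have habs : ‖w - m‖ ≤ k * ‖w + (starRingEnd ℂ) m‖ := by
    have hpos : (0:ℝ) < ‖w + (starRingEnd ℂ) m‖ := norm_pos_iff.2 (hden _ htball)
    have : ‖g t‖ = ‖w - m‖ / ‖w + (starRingEnd ℂ) m‖ := by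
      simp [hg, hw, norm_div]
    rw [this] at hsch'
    rwa [div_le_iff₀ hpos] at hsch'
  have hsq : Complex.normSq (w - m) ≤ k ^ 2 * Complex.normSq (w + (starRingEnd ℂ) m) := by
    rw [← Complex.sq_norm, ← Complex.sq_norm]
    calc (‖w - m‖) ^ 2 ≤ (k * ‖w + (starRingEnd ℂ) m‖) ^ 2 := by
          apply sq_le_sq' _ habs
          nlinarith [norm_nonneg (w - m), norm_nonneg (w + (starRingEnd ℂ) m), hk0]
    _ = k ^ 2 * (‖w + (starRingEnd ℂ) m‖) ^ 2 := by ring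
  have hid : Complex.normSq (w - m) = Complex.normSq (w + (starRingEnd ℂ) m)
      - 4 * w.re * m.re := hkey _ htball
  have hwre : w.re < 0 := hneg _ htball
  have hlow : m.re ^ 2 ≤ Complex.normSq (w + (starRingEnd ℂ) m) := by
    have h1 : Complex.normSq (w + (starRingEnd ℂ) m) = (w.re + m.re)^2 + (w.im - m.im)^2 := by
      simp only [Complex.normSq_apply, Complex.add_re, Complex.add_im, Complex.conj_re,
        Complex.conj_im]
      ring
    nlinarith [sq_nonneg (w.im - m.im), sq_nonneg w.re, hwre, ha]
  -- combine
  have hcomb : (1 - k ^ 2) * Complex.normSq (w + (starRingEnd ℂ) m) ≤ 4 * w.re * m.re := by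
    nlinarith [hid, hsq]
  have h1k : t / r ≤ 1 - k ^ 2 := by
    have : 1 - k = t / r := by rw [hk]; field_simp; ring
    nlinarith [hk0, hk1]
  have hfin : t / r * m.re ^ 2 ≤ 4 * w.re * m.re := by
    calc t / r * m.re ^ 2 ≤ (1 - k ^ 2) * m.re ^ 2 := by
          apply mul_le_mul_of_nonneg_right h1k (sq_nonneg _)
    _ ≤ (1 - k ^ 2) * Complex.normSq (w + (starRingEnd ℂ) m) := by
          apply mul_le_mul_of_nonneg_left hlow
          nlinarith [hk0, hk1]
    _ ≤ 4 * w.re * m.re := hcomb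
  -- divide by 4 * m.re < 0
  have hfin' : t * m.re ^ 2 ≤ 4 * w.re * m.re * r := by
    have h2 := mul_le_mul_of_nonneg_right hfin hr.le
    have h3 : t / r * m.re ^ 2 * r = t * m.re ^ 2 := by field_simp
    linarith [h2, h3.le, h3.ge]
  have : w.re ≤ m.re / (4 * r) * t := by
    rw [div_mul_eq_mul_div, le_div_iff₀ (by linarith : (0:ℝ) < 4 * r)]
    nlinarith [hfin', ha]
  exact this



/-- Second-order Taylor estimate with modulus-of-continuity bound on the
second derivative along the segment. -/
lemma taylor_two_bound {E : Type*} [NormedAddCommGroup E] [NormedSpace ℝ E]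
    (F : E → ℝ) (hF : ContDiff ℝ 2 F) (p h : E) (κ : ℝ)
    (hb : ∀ t ∈ Set.Icc (0:ℝ) 1,
      ‖fderiv ℝ (fderiv ℝ F) (p + t • h) - fderiv ℝ (fderiv ℝ F) p‖ ≤ κ) :
    |F (p + h) - F p - fderiv ℝ F p h - fderiv ℝ (fderiv ℝ F) p h h / 2|
      ≤ κ * ‖h‖ ^ 2 := by
  have hF1 : ContDiff ℝ 1 (fderiv ℝ F) := hF.fderiv_right (le_refl _)
  have hdF : ∀ x, HasFDerivAt F (fderiv ℝ F x) x := fun x =>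
    (hF.differentiable (by norm_num) x).hasFDerivAt
  have hdF2 : ∀ x, HasFDerivAt (fderiv ℝ F) (fderiv ℝ (fderiv ℝ F) x) x := fun x =>
    (hF1.differentiable (by norm_num) x).hasFDerivAt
  set B := fun x => fderiv ℝ (fderiv ℝ F) x with hB
  set u : ℝ → E := fun t => p + t • h with hu
  have hu' : ∀ t : ℝ, HasDerivAt u h t := by
    intro t
    simpa [hu] using ((hasDerivAt_id t).smul_const h).const_add p
  -- first derivative of t ↦ F (u t)
  have hg' : ∀ t : ℝ, HasDerivAt (fun s => F (u s)) (fderiv ℝ F (u t) h) t := by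
    intro t
    exact (hdF (u t)).comp_hasDerivAt t (hu' t)
  -- derivative of t ↦ fderiv F (u t) h
  have hg'' : ∀ t : ℝ, HasDerivAt (fun s => fderiv ℝ F (u s) h) (B (u t) h h) t := by
    intro t
    have h1 : HasDerivAt (fun s => fderiv ℝ F (u s)) (B (u t) h) t := by
      exact (hdF2 (u t)).comp_hasDerivAt t (hu' t)
    have h2 := h1.clm_apply (hasDerivAt_const t h)
    simpa using h2
  set ψ' : ℝ → ℝ := fun t => fderiv ℝ F (u t) h - fderiv ℝ F p h - t * (B p h h) with hψ'
  set ψ : ℝ → ℝ := fun t =>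
    F (u t) - F p - t * (fderiv ℝ F p h) - t ^ 2 / 2 * (B p h h) with hψ
  have hψd : ∀ t ∈ Set.Icc (0:ℝ) 1, HasDerivWithinAt ψ (ψ' t) (Set.Icc (0:ℝ) 1) t := by
    intro t _
    have : HasDerivAt ψ (ψ' t) t := by
      have := ((hg' t).sub_const (F p)).sub
        (((hasDerivAt_id t).const_mul (fderiv ℝ F p h)).sub_const 0)
      -- build directly
      have h1 : HasDerivAt (fun s : ℝ => F (u s) - F p - s * (fderiv ℝ F p h)
          - s ^ 2 / 2 * (B p h h))
          (fderiv ℝ F (u t) h - fderiv ℝ F p h - t * (B p h h)) t := by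
        have ha := (hg' t).sub_const (F p)
        have hb' : HasDerivAt (fun s : ℝ => s * (fderiv ℝ F p h)) (fderiv ℝ F p h) t := by
          simpa using (hasDerivAt_id t).mul_const (fderiv ℝ F p h)
        have hc : HasDerivAt (fun s : ℝ => s ^ 2 / 2 * (B p h h)) (t * (B p h h)) t := by
          have : HasDerivAt (fun s : ℝ => s ^ 2 / 2) t t := by
            simpa using ((hasDerivAt_pow 2 t).div_const 2)
          simpa using this.mul_const (B p h h)
        exact (ha.sub hb').sub hc
      exact h1
    exact this.hasDerivWithinAt
  have hψ'd : ∀ t ∈ Set.Icc (0:ℝ) 1,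
      HasDerivWithinAt ψ' (B (u t) h h - B p h h) (Set.Icc (0:ℝ) 1) t := by
    intro t _
    have h1 : HasDerivAt ψ' (B (u t) h h - B p h h) t := by
      have ha := (hg'' t).sub_const (fderiv ℝ F p h)
      have hb' : HasDerivAt (fun s : ℝ => s * (B p h h)) (B p h h) t := by
        simpa using (hasDerivAt_id t).mul_const (B p h h)
      exact ha.sub hb'
    exact h1.hasDerivWithinAt
  -- bound on ψ''
  have hbd : ∀ t ∈ Set.Ico (0:ℝ) 1, ‖B (u t) h h - B p h h‖ ≤ κ * ‖h‖ ^ 2 := by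
    intro t ht
    have h1 : B (u t) h h - B p h h = ((B (u t) - B p) h) h := by simp
    rw [h1]
    calc ‖((B (u t) - B p) h) h‖ ≤ ‖(B (u t) - B p) h‖ * ‖h‖ :=
          ContinuousLinearMap.le_opNorm _ h
    _ ≤ (‖B (u t) - B p‖ * ‖h‖) * ‖h‖ := by
          apply mul_le_mul_of_nonneg_right _ (norm_nonneg h)
          exact ContinuousLinearMap.le_opNorm _ h
    _ ≤ (κ * ‖h‖) * ‖h‖ := by
          have := hb t ⟨ht.1, ht.2.le⟩
          apply mul_le_mul_of_nonneg_right _ (norm_nonneg h)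
          exact mul_le_mul_of_nonneg_right this (norm_nonneg h)
    _ = κ * ‖h‖ ^ 2 := by ring
  -- MVT twice
  have hψ'bd : ∀ t ∈ Set.Icc (0:ℝ) 1, ‖ψ' t - ψ' 0‖ ≤ κ * ‖h‖ ^ 2 * (t - 0) :=
    norm_image_sub_le_of_norm_deriv_le_segment' hψ'd hbd
  have hψ'0 : ψ' 0 = 0 := by simp [hψ', hu]
  have hψbd : ∀ t ∈ Set.Ico (0:ℝ) 1, ‖ψ' t‖ ≤ κ * ‖h‖ ^ 2 := by
    intro t ht
    have := hψ'bd t ⟨ht.1, ht.2.le⟩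
    rw [hψ'0, sub_zero] at this
    calc ‖ψ' t‖ ≤ κ * ‖h‖ ^ 2 * (t - 0) := this
    _ ≤ κ * ‖h‖ ^ 2 * 1 := by
        have hκ : 0 ≤ κ * ‖h‖ ^ 2 :=
          le_trans (norm_nonneg _) (hbd 0 ⟨le_rfl, zero_lt_one⟩)
        nlinarith [ht.1, ht.2]
    _ = κ * ‖h‖ ^ 2 := mul_one _
  have hfinal := norm_image_sub_le_of_norm_deriv_le_segment' hψd hψbd 1
    ⟨zero_le_one, le_rfl⟩
  have hψ0 : ψ 0 = 0 := by simp [hψ, hu]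
  rw [hψ0, sub_zero] at hfinal
  have hψ1 : ψ 1 = F (p + h) - F p - fderiv ℝ F p h - B p h h / 2 := by
    simp [hψ, hu]
    ring
  rw [hψ1] at hfinal
  calc |F (p + h) - F p - fderiv ℝ F p h - B p h h / 2| ≤ κ * ‖h‖ ^ 2 * (1 - 0) := hfinal
  _ = κ * ‖h‖ ^ 2 := by ring

section QbfSection
open Complex


variable {E : Type*} [NormedAddCommGroup E] [InnerProductSpace ℂ E]

/-- The complex quadratic part of a real bilinear form on a complex space. -/
noncomputable def Qbf (B : E →L[ℝ] E →L[ℝ] ℝ) (h k : E) : ℂ :=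
  (((B h k : ℝ) : ℂ) - ((B (Complex.I • h) (Complex.I • k) : ℝ) : ℂ)
    - Complex.I * ((B h (Complex.I • k) : ℝ) : ℂ)
    - Complex.I * ((B (Complex.I • h) k : ℝ) : ℂ)) / 2

lemma Qbf_re (B : E →L[ℝ] E →L[ℝ] ℝ) (h k : E) :
    (Qbf B h k).re = (B h k - B (Complex.I • h) (Complex.I • k)) / 2 := by
  simp [Qbf, Complex.div_re]

lemma Qbf_add_right (B : E →L[ℝ] E →L[ℝ] ℝ) (h k k' : E) :
    Qbf B h (k + k') = Qbf B h k + Qbf B h k' := by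
  simp only [Qbf, smul_add, map_add]
  push_cast
  ring

lemma Qbf_add_left (B : E →L[ℝ] E →L[ℝ] ℝ) (h h' k : E) :
    Qbf B (h + h') k = Qbf B h k + Qbf B h' k := by
  simp only [Qbf, smul_add, map_add, ContinuousLinearMap.add_apply]
  push_cast
  ring

lemma Qbf_smul_real_right (B : E →L[ℝ] E →L[ℝ] ℝ) (r : ℝ) (h k : E) :
    Qbf B h (r • k) = (r : ℂ) * Qbf B h k := by
  have hc : Complex.I • r • k = r • Complex.I • k := smul_comm _ _ _
  simp only [Qbf, hc, map_smul, smul_eq_mul]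
  push_cast
  ring

lemma Qbf_smul_I_right (B : E →L[ℝ] E →L[ℝ] ℝ) (h k : E) :
    Qbf B h (Complex.I • k) = Complex.I * Qbf B h k := by
  have hII : Complex.I • Complex.I • k = -k := by
    rw [smul_smul, Complex.I_mul_I, neg_one_smul]
  simp only [Qbf, hII, map_neg]
  push_cast
  linear_combination (((B h (Complex.I • k) : ℝ) : ℂ)
    + ((B (Complex.I • h) k : ℝ) : ℂ)) / 2 * Complex.I_mul_I

lemma Qbf_smul_right (B : E →L[ℝ] E →L[ℝ] ℝ) (c : ℂ) (h k : E) :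
    Qbf B h (c • k) = c * Qbf B h k := by
  have hdec : c • k = c.re • k + c.im • (Complex.I • k) := by
    calc c • k = ((c.re : ℂ) + (c.im : ℂ) * Complex.I) • k := by rw [Complex.re_add_im]
    _ = (c.re : ℂ) • k + ((c.im : ℂ) * Complex.I) • k := add_smul _ _ _
    _ = c.re • k + (c.im : ℂ) • (Complex.I • k) := by
        rw [mul_smul]; norm_num [Complex.coe_smul]
    _ = c.re • k + c.im • (Complex.I • k) := by rw [Complex.coe_smul]
  rw [hdec, Qbf_add_right, Qbf_smul_real_right, Qbf_smul_real_right, Qbf_smul_I_right]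
  linear_combination (Qbf B h k) * (Complex.re_add_im c)

lemma Qbf_symm (B : E →L[ℝ] E →L[ℝ] ℝ) (hsymm : ∀ x y, B x y = B y x) (h k : E) :
    Qbf B h k = Qbf B k h := by
  simp only [Qbf, hsymm h k, hsymm (Complex.I • h) (Complex.I • k),
    hsymm h (Complex.I • k), hsymm (Complex.I • h) k]
  ring

lemma Qbf_norm_le (B : E →L[ℝ] E →L[ℝ] ℝ) (h k : E) :
    ‖Qbf B h k‖ ≤ 2 * ‖B‖ * ‖h‖ * ‖k‖ := by
  have hI : ∀ x : E, ‖Complex.I • x‖ = ‖x‖ := by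
    intro x; rw [norm_smul, Complex.norm_I, one_mul]
  have hbd : ∀ x y : E, |B x y| ≤ ‖B‖ * ‖x‖ * ‖y‖ := by
    intro x y
    calc |B x y| = ‖B x y‖ := rfl
    _ ≤ ‖B x‖ * ‖y‖ := (B x).le_opNorm y
    _ ≤ (‖B‖ * ‖x‖) * ‖y‖ := mul_le_mul_of_nonneg_right (B.le_opNorm x) (norm_nonneg y)
    _ = ‖B‖ * ‖x‖ * ‖y‖ := by ring
  have h1 := hbd h k
  have h2 := hbd (Complex.I • h) (Complex.I • k)
  have h3 := hbd h (Complex.I • k)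
  have h4 := hbd (Complex.I • h) k
  rw [hI, hI] at h2; rw [hI] at h3; rw [hI] at h4
  calc ‖Qbf B h k‖ ≤ (‖((B h k : ℝ) : ℂ)‖ + ‖((B (Complex.I • h) (Complex.I • k) : ℝ) : ℂ)‖
        + ‖Complex.I * ((B h (Complex.I • k) : ℝ) : ℂ)‖
        + ‖Complex.I * ((B (Complex.I • h) k : ℝ) : ℂ)‖) / 2 := by
        rw [Qbf]
        rw [norm_div]
        gcongr ?_ / ?_
        · exact le_trans (norm_sub_le _ _) (by
            have := norm_sub_le (((B h k : ℝ) : ℂ) - ((B (Complex.I • h) (Complex.I • k) : ℝ) : ℂ))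
              (Complex.I * ((B h (Complex.I • k) : ℝ) : ℂ))
            have h5 := norm_sub_le (((B h k : ℝ) : ℂ)) (((B (Complex.I • h) (Complex.I • k) : ℝ) : ℂ))
            linarith [norm_sub_le ((((B h k : ℝ) : ℂ) - ((B (Complex.I • h) (Complex.I • k) : ℝ) : ℂ))
              - Complex.I * ((B h (Complex.I • k) : ℝ) : ℂ)) (Complex.I * ((B (Complex.I • h) k : ℝ) : ℂ))])
        · simp
  _ ≤ (‖B‖ * ‖h‖ * ‖k‖ + ‖B‖ * ‖h‖ * ‖k‖ + ‖B‖ * ‖h‖ * ‖k‖ + ‖B‖ * ‖h‖ * ‖k‖) / 2 := by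
        have e1 : ‖((B h k : ℝ) : ℂ)‖ = |B h k| := by
          rw [Complex.norm_real]; rfl
        have e2 : ‖Complex.I * ((B h (Complex.I • k) : ℝ) : ℂ)‖ = |B h (Complex.I • k)| := by
          rw [norm_mul, Complex.norm_I, one_mul, Complex.norm_real]; rfl
        have e3 : ‖Complex.I * ((B (Complex.I • h) k : ℝ) : ℂ)‖ = |B (Complex.I • h) k| := by
          rw [norm_mul, Complex.norm_I, one_mul, Complex.norm_real]; rfl
        have e4 : ‖((B (Complex.I • h) (Complex.I • k) : ℝ) : ℂ)‖ = |B (Complex.I • h) (Complex.I • k)| := by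
          rw [Complex.norm_real]; rfl
        rw [e1, e2, e3, e4]
        linarith
  _ = 2 * ‖B‖ * ‖h‖ * ‖k‖ := by ring

lemma Qbf_zero_left (B : E →L[ℝ] E →L[ℝ] ℝ) (k : E) : Qbf B 0 k = 0 := by
  simp [Qbf]

variable [CompleteSpace E] [FiniteDimensional ℂ E]

/-- `Qbf B w ·` as a continuous `ℂ`-linear map. -/
noncomputable def QbCLM (B : E →L[ℝ] E →L[ℝ] ℝ) (w : E) : E →L[ℂ] ℂ :=
  LinearMap.toContinuousLinearMap
    { toFun := fun v => Qbf B w v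
      map_add' := fun k k' => Qbf_add_right B w k k'
      map_smul' := fun c k => by simpa using Qbf_smul_right B c w k }

@[simp] lemma QbCLM_apply (B : E →L[ℝ] E →L[ℝ] ℝ) (w v : E) :
    QbCLM B w v = Qbf B w v := rfl

lemma hasFDerivAt_Qbf (B : E →L[ℝ] E →L[ℝ] ℝ) (hsymm : ∀ x y, B x y = B y x) (w₀ : E) :
    HasFDerivAt (fun w => Qbf B w w) ((2 : ℂ) • QbCLM B w₀) w₀ := by
  rw [hasFDerivAt_iff_isLittleO_nhds_zero]
  have heq : ∀ d : E, Qbf B (w₀ + d) (w₀ + d) - Qbf B w₀ w₀ - ((2 : ℂ) • QbCLM B w₀) d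
      = Qbf B d d := by
    intro d
    simp only [ContinuousLinearMap.smul_apply, QbCLM_apply, smul_eq_mul]
    rw [Qbf_add_left, Qbf_add_right, Qbf_add_right, Qbf_symm B hsymm d w₀]
    ring
  have hlo : (fun d : E => Qbf B d d) =o[nhds (0 : E)] fun d => d := by
    rw [Asymptotics.isLittleO_iff]
    intro ε hε
    have hpos : (0 : ℝ) < ε / (2 * ‖B‖ + 1) := by positivity
    filter_upwards [Metric.ball_mem_nhds (0 : E) hpos] with d hd
    have hdlt : ‖d‖ < ε / (2 * ‖B‖ + 1) := by
      simpa [mem_ball, dist_zero_right] using hd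
    have h2 : ‖d‖ * (2 * ‖B‖ + 1) < ε := by
      rwa [lt_div_iff₀ (by positivity)] at hdlt
    calc ‖Qbf B d d‖ ≤ 2 * ‖B‖ * ‖d‖ * ‖d‖ := Qbf_norm_le B d d
    _ ≤ ε * ‖d‖ := by
        nlinarith [mul_le_mul_of_nonneg_right h2.le (norm_nonneg d), norm_nonneg B,
          norm_nonneg d, sq_nonneg ‖d‖]
  exact hlo.congr (fun d => (heq d).symm) (fun _ => rfl)

/-- The entire "holomorphic second-order part" function and its derivative. -/
lemma hasFDerivAt_Ffun (B : E →L[ℝ] E →L[ℝ] ℝ) (hsymm : ∀ x y, B x y = B y x)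
    (c : ℝ) (ν : E) (w₀ : E) :
    HasFDerivAt (fun w => (c : ℂ) * ((innerSL ℂ ν : E →L[ℂ] ℂ) w) + Qbf B w w / 2)
      ((c : ℂ) • (innerSL ℂ ν : E →L[ℂ] ℂ) + QbCLM B w₀) w₀ := by
  have h1 : HasFDerivAt (fun w : E => (c : ℂ) * ((innerSL ℂ ν : E →L[ℂ] ℂ) w))
      ((c : ℂ) • (innerSL ℂ ν : E →L[ℂ] ℂ)) w₀ :=
    ((innerSL ℂ ν : E →L[ℂ] ℂ).hasFDerivAt).const_mul _
  have h2 : HasFDerivAt (fun w => Qbf B w w / 2) (QbCLM B w₀) w₀ := by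
    have h3 := (hasFDerivAt_Qbf B hsymm w₀).const_smul ((2 : ℂ)⁻¹)
    have e1 : ((2:ℂ)⁻¹ • ((2 : ℂ) • QbCLM B w₀)) = QbCLM B w₀ := by
      rw [smul_smul]; norm_num
    rw [e1] at h3
    exact h3.congr_of_eventuallyEq (Filter.Eventually.of_forall fun w => by
      simp only [Pi.smul_apply, smul_eq_mul]; ring)
  exact h1.add h2

end QbfSection

set_option maxHeartbeats 4000000 in
/-- **Hopf-lemma positivity at the boundary fixed point.**  Let `Ω ⊂ ℂⁿ` be a
bounded strongly pseudoconvex domain with `C²` boundary whose defining function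
`ρ` is strictly plurisubharmonic on a neighborhood of the closure of `Ω`, let
`p ∈ ∂Ω`, and let `f : Ω → Ω` be holomorphic, `C²` up to the boundary near `p`,
with `f(p) = p`.  Then `dρ_p(df_p(ν_p)) > 0`; equivalently
`Re⟨J_f(p)ν_p, ν_p⟩ > 0`. -/
theorem boundary_hopf_positivity
    {n : ℕ} (hn : 1 ≤ n)
    (Ω : Set (EuclideanSpace ℂ (Fin n))) (hΩopen : IsOpen Ω)
    (hΩconn : IsConnected Ω) (hΩbd : Bornology.IsBounded Ω)
    -- `C²` defining function for `Ω`
    (ρ : EuclideanSpace ℂ (Fin n) → ℝ) (hρC2 : ContDiff ℝ 2 ρ)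
    (hρΩ : Ω = {z | ρ z < 0}) (hρfr : frontier Ω = {z | ρ z = 0})
    (hρgrad : ∀ q ∈ frontier Ω, fderiv ℝ ρ q ≠ 0)
    -- strong pseudoconvexity: `ρ` strictly plurisubharmonic near the closure of `Ω`
    (V : Set (EuclideanSpace ℂ (Fin n))) (hVopen : IsOpen V) (hVcl : closure Ω ⊆ V)
    (hpsh : ∀ q ∈ V, ∀ v : EuclideanSpace ℂ (Fin n), v ≠ 0 → 0 < LeviForm ρ q v)
    -- the boundary point `p` and the unit outward normal `ν = ∇ρ(p)/|∇ρ(p)|`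
    (p : EuclideanSpace ℂ (Fin n)) (hp : p ∈ frontier Ω)
    (ν : EuclideanSpace ℂ (Fin n)) (hν1 : ‖ν‖ = 1)
    (hν : ∃ c : ℝ, 0 < c ∧ ∀ v, fderiv ℝ ρ p v = c * (inner ℂ v ν : ℂ).re)
    -- the holomorphic self-map `f`, C² up to the boundary near `p`, fixing `p`
    (f : EuclideanSpace ℂ (Fin n) → EuclideanSpace ℂ (Fin n))
    (hf : DifferentiableOn ℂ f Ω) (hfself : MapsTo f Ω Ω)
    (U : Set (EuclideanSpace ℂ (Fin n))) (hUopen : IsOpen U) (hpU : p ∈ U)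
    (hfC2 : ContDiffOn ℝ 2 f (closure Ω ∩ U)) (hfp : f p = p)
    -- `A` is the (ℂ-linear) Jacobian `J_f(p)` of `f` at `p`
    (A : EuclideanSpace ℂ (Fin n) →L[ℂ] EuclideanSpace ℂ (Fin n))
    (hA : HasFDerivWithinAt f (A.restrictScalars ℝ) (closure Ω) p) :
    0 < fderiv ℝ ρ p (A ν) ∧ 0 < (inner ℂ ν (A ν) : ℂ).re := by
  classical
  obtain ⟨c, hc, hνc⟩ := hν
  have hpcl : p ∈ closure Ω := frontier_subset_closure hp
  have hρp : ρ p = 0 := by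
    have h := hp
    rw [hρfr] at h
    exact h
  have hpV : p ∈ V := hVcl hpcl
  have hpnΩ : p ∉ Ω := by
    intro hmem
    have h := hp
    rw [hΩopen.frontier_eq] at h
    exact h.2 hmem
  -- the second derivative of ρ at p
  set B := fderiv ℝ (fderiv ℝ ρ) p with hBdef
  have hB1 : ContDiff ℝ 1 (fderiv ℝ ρ) := hρC2.fderiv_right (by norm_num)
  have hBcont : Continuous (fun x => fderiv ℝ (fderiv ℝ ρ) x) :=
    (hB1.fderiv_right (m := 0) (by norm_num)).continuous
  have hsymm : ∀ x y, B x y = B y x := fun x y =>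
    second_derivative_symmetric (fun z => (hρC2.differentiable (by norm_num) z).hasFDerivAt)
      ((hB1.differentiable (by norm_num) p).hasFDerivAt) x y
  -- Levi form in terms of the second derivative
  have hLevi : ∀ v : EuclideanSpace ℂ (Fin n), LeviForm ρ p v
      = (B v v + B (Complex.I • v) (Complex.I • v)) / 4 := by
    intro v
    rw [LeviForm, iteratedFDeriv_two_apply, iteratedFDeriv_two_apply]
    simp [hBdef]
  -- positive lower bound for the Levi form at p
  have hsph : IsCompact (sphere (0 : EuclideanSpace ℂ (Fin n)) 1) := isCompact_sphere 0 1
  have hsphne : (sphere (0 : EuclideanSpace ℂ (Fin n)) 1).Nonempty := by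
    exact ⟨ν, by simp [mem_sphere, dist_zero_right, hν1]⟩
  have hLcont : ContinuousOn (fun v => LeviForm ρ p v)
      (sphere (0 : EuclideanSpace ℂ (Fin n)) 1) := by
    apply Continuous.continuousOn
    have h1 : Continuous fun v : EuclideanSpace ℂ (Fin n) => B v v :=
      (B.continuous.clm_apply continuous_id)
    have h2 : Continuous fun v : EuclideanSpace ℂ (Fin n) =>
        B (Complex.I • v) (Complex.I • v) := by
      have hs : Continuous fun v : EuclideanSpace ℂ (Fin n) => Complex.I • v :=
        continuous_id.const_smul Complex.I
      exact ((B.continuous.comp hs).clm_apply hs)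
    have : Continuous fun v : EuclideanSpace ℂ (Fin n) =>
        (B v v + B (Complex.I • v) (Complex.I • v)) / 4 := (h1.add h2).div_const 4
    refine this.congr fun v => ?_
    rw [hLevi]
  obtain ⟨v₀, hv₀mem, hv₀min⟩ := hsph.exists_isMinOn hsphne hLcont
  set δ := LeviForm ρ p v₀ with hδdef
  have hδ : 0 < δ := by
    apply hpsh p hpV v₀
    intro h0
    rw [mem_sphere, dist_zero_right, h0] at hv₀mem
    simp at hv₀mem
  have hLlow : ∀ v : EuclideanSpace ℂ (Fin n), δ * ‖v‖ ^ 2 ≤ LeviForm ρ p v := by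
    intro v
    rcases eq_or_ne v 0 with rfl | hv0
    · simp [hLevi]
    · have hnv : (0:ℝ) < ‖v‖ := norm_pos_iff.2 hv0
      set u : EuclideanSpace ℂ (Fin n) := ‖v‖⁻¹ • v with hu
      have humem : u ∈ sphere (0 : EuclideanSpace ℂ (Fin n)) 1 := by
        simp [hu, mem_sphere, dist_zero_right, norm_smul, abs_of_pos (inv_pos.2 hnv),
          inv_mul_cancel₀ hnv.ne']
      have hmin := hv₀min humem
      have hhom : ∀ (s : ℝ) (w : EuclideanSpace ℂ (Fin n)),
          LeviForm ρ p (s • w) = s ^ 2 * LeviForm ρ p w := by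
        intro s w
        have hIsw : Complex.I • (s • w) = s • (Complex.I • w) := smul_comm _ _ _
        rw [hLevi, hLevi, hIsw]
        simp only [map_smul, ContinuousLinearMap.smul_apply, smul_eq_mul]
        ring
      have hveq : v = ‖v‖ • u := by
        rw [hu, smul_smul, mul_inv_cancel₀ hnv.ne', one_smul]
      calc δ * ‖v‖ ^ 2 ≤ LeviForm ρ p u * ‖v‖ ^ 2 := by
            apply mul_le_mul_of_nonneg_right hmin (sq_nonneg _)
      _ = LeviForm ρ p (‖v‖ • u) := by rw [hhom ‖v‖ u]; ring
      _ = LeviForm ρ p v := by rw [← hveq]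
  -- choose ε₀ by continuity of the second derivative
  obtain ⟨ε₀, hε₀, hε₀prop⟩ : ∃ ε₀ > 0, ∀ x : EuclideanSpace ℂ (Fin n),
      dist x p < ε₀ → ‖fderiv ℝ (fderiv ℝ ρ) x - B‖ < δ / 2 := by
    obtain ⟨dd, hdd, hprop⟩ := (Metric.continuousAt_iff (f := fun x => fderiv ℝ (fderiv ℝ ρ) x) (a := p)).1 hBcont.continuousAt (δ / 2)
      (half_pos hδ)
    refine ⟨dd, hdd, fun x hx => ?_⟩
    have h2 := hprop hx
    rw [hBdef]
    have := dist_eq_norm (E := EuclideanSpace ℂ (Fin n) →L[ℝ] EuclideanSpace ℂ (Fin n) →L[ℝ] ℝ)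
      (fderiv ℝ (fderiv ℝ ρ) x) (fderiv ℝ (fderiv ℝ ρ) p)
    exact this ▸ h2
  -- Taylor estimate
  have htay : ∀ h : EuclideanSpace ℂ (Fin n), ‖h‖ < ε₀ →
      |ρ (p + h) - ρ p - fderiv ℝ ρ p h - B h h / 2| ≤ δ / 2 * ‖h‖ ^ 2 := by
    intro h hh
    apply taylor_two_bound ρ hρC2 p h (δ / 2)
    intro t ht
    apply le_of_lt
    apply hε₀prop
    rw [dist_eq_norm]
    have : p + t • h - p = t • h := by abel
    rw [this, norm_smul, Real.norm_eq_abs, abs_of_nonneg ht.1]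
    calc t * ‖h‖ ≤ 1 * ‖h‖ := mul_le_mul_of_nonneg_right ht.2 (norm_nonneg h)
    _ = ‖h‖ := one_mul _
    _ < ε₀ := hh
  -- the linear term
  have hdρ : ∀ h : EuclideanSpace ℂ (Fin n),
      fderiv ℝ ρ p h = c * (inner ℂ ν h : ℂ).re := by
    intro h
    rw [hνc h]
    congr 1
    rw [← inner_conj_symm ν h]
    rw [Complex.conj_re]
  -- key lower estimate
  have key1 : ∀ h : EuclideanSpace ℂ (Fin n), ‖h‖ < ε₀ →
      c * (inner ℂ ν h : ℂ).re + (Qbf B h h).re / 2 ≤ ρ (p + h) - δ / 2 * ‖h‖ ^ 2 := by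
    intro h hh
    have h1 := htay h hh
    have h2 : (Qbf B h h).re / 2 + LeviForm ρ p h = B h h / 2 := by
      rw [Qbf_re, hLevi]
      ring
    have h3 := hLlow h
    have h4 := abs_le.1 h1
    rw [hρp, hdρ h] at h4
    linarith [h4.1, h4.2, h2, h3]
  -- key upper estimate
  have key2 : ∀ h : EuclideanSpace ℂ (Fin n), ‖h‖ < ε₀ →
      ρ (p + h) ≤ c * (inner ℂ ν h : ℂ).re + (‖B‖ / 2 + δ / 2) * ‖h‖ ^ 2 := by
    intro h hh
    have h1 := htay h hh
    have h4 := abs_le.1 h1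
    rw [hρp, hdρ h] at h4
    have hBb : B h h ≤ ‖B‖ * ‖h‖ ^ 2 := by
      calc B h h ≤ |B h h| := le_abs_self _
      _ = ‖B h h‖ := rfl
      _ ≤ ‖B h‖ * ‖h‖ := (B h).le_opNorm h
      _ ≤ (‖B‖ * ‖h‖) * ‖h‖ := mul_le_mul_of_nonneg_right (B.le_opNorm h) (norm_nonneg h)
      _ = ‖B‖ * ‖h‖ ^ 2 := by ring
    linarith [h4.1, h4.2, hBb]
  -- continuity of f at p within the closure
  have hfcont : ContinuousWithinAt f (closure Ω) p := hA.continuousWithinAt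
  obtain ⟨r', hr', hr'prop⟩ : ∃ r' > 0, ∀ z ∈ closure Ω,
      dist z p < r' → dist (f z) p < ε₀ := by
    rw [Metric.continuousWithinAt_iff] at hfcont
    obtain ⟨d, hd, hprop⟩ := hfcont ε₀ hε₀
    exact ⟨d, hd, fun z hz hdist => by
      have := hprop hz hdist
      rwa [hfp] at this⟩
  -- the radius of the interior ball
  set M : ℝ := ‖B‖ / 2 + δ / 2 with hM
  have hMpos : 0 < M := by positivity
  set r : ℝ := min (min (ε₀ / 2) (r' / 2)) (c / (4 * M + 1)) with hrdef
  have hr : 0 < r := by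
    apply lt_min (lt_min (half_pos hε₀) (half_pos hr')) _
    positivity
  have hr2ε : 2 * r ≤ ε₀ := by
    have := min_le_left (min (ε₀ / 2) (r' / 2)) (c / (4 * M + 1))
    have h2 := min_le_left (ε₀ / 2) (r' / 2)
    have := le_trans this h2
    linarith
  have hr2r' : 2 * r ≤ r' := by
    have := min_le_left (min (ε₀ / 2) (r' / 2)) (c / (4 * M + 1))
    have h2 := min_le_right (ε₀ / 2) (r' / 2)
    have := le_trans this h2
    linarith
  have hrM : 2 * r * M < c := by
    have h1 : r ≤ c / (4 * M + 1) := min_le_right _ _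
    have h2 : 0 < 4 * M + 1 := by positivity
    have h3 : r * (4 * M + 1) ≤ c := by
      rw [← le_div_iff₀ h2]; exact h1
    nlinarith
  -- the interior ball
  set q₀ : EuclideanSpace ℂ (Fin n) := p - r • ν with hq₀
  have hball : ball q₀ r ⊆ Ω := by
    intro z hz
    set h : EuclideanSpace ℂ (Fin n) := z - p with hh
    have hzp : z = p + h := by rw [hh]; abel
    have hznorm : ‖h + r • ν‖ < r := by
      have : z - q₀ = h + r • ν := by rw [hq₀, hh]; abel
      rw [mem_ball, dist_eq_norm, this] at hz
      exact hz
    have hrν : ‖r • ν‖ = r := by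
      rw [norm_smul, Real.norm_eq_abs, abs_of_pos hr, hν1, mul_one]
    have hhnorm : ‖h‖ < 2 * r := by
      calc ‖h‖ = ‖(h + r • ν) - r • ν‖ := by congr 1; abel
      _ ≤ ‖h + r • ν‖ + ‖r • ν‖ := norm_sub_le _ _
      _ < r + r := by rw [hrν]; linarith
      _ = 2 * r := by ring
    have hhε : ‖h‖ < ε₀ := lt_of_lt_of_le hhnorm hr2ε
    have hh0 : h ≠ 0 := by
      intro h0
      rw [h0, zero_add, hrν] at hznorm
      exact lt_irrefl r hznorm
    -- ⟪ν, h⟫ estimate from the ball condition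
    have hinner : (inner ℂ ν h : ℂ).re ≤ -‖h‖ ^ 2 / (2 * r) := by
      have hexp : ‖h + r • ν‖ ^ 2
          = ‖h‖ ^ 2 + 2 * (inner ℂ h (r • ν) : ℂ).re + ‖r • ν‖ ^ 2 := by
        exact_mod_cast @norm_add_sq ℂ _ _ _ _ h (r • ν)
      have hsm : (inner ℂ h (r • ν) : ℂ).re = r * (inner ℂ ν h : ℂ).re := by
        have h1 : (inner ℂ h (r • ν) : ℂ) = (r : ℂ) * (inner ℂ h ν : ℂ) := by
          rw [← Complex.coe_smul, inner_smul_right]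
        rw [h1, Complex.re_ofReal_mul]
        congr 1
        rw [← inner_conj_symm ν h]
        rw [Complex.conj_re]
      have hsq : ‖h + r • ν‖ ^ 2 < r ^ 2 := by
        have := hznorm
        nlinarith [norm_nonneg (h + r • ν)]
      rw [hexp, hsm, hrν] at hsq
      rw [le_div_iff₀ (by linarith : (0:ℝ) < 2 * r)]
      nlinarith [hsq]
    have hρz : ρ z < 0 := by
      rw [hzp]
      have := key2 h hhε
      have hM2 : c * (inner ℂ ν h : ℂ).re + M * ‖h‖ ^ 2
          ≤ c * (-‖h‖ ^ 2 / (2 * r)) + M * ‖h‖ ^ 2 := by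
        have h5 := mul_le_mul_of_nonneg_left hinner hc.le
        linarith
      have hhpos : 0 < ‖h‖ := norm_pos_iff.2 hh0
      have hneg : c * (-‖h‖ ^ 2 / (2 * r)) + M * ‖h‖ ^ 2 < 0 := by
        have h2r : (0:ℝ) < 2 * r := by linarith
        have e1 : c * (-‖h‖ ^ 2 / (2 * r)) = -(c * ‖h‖ ^ 2 / (2 * r)) := by ring
        have e2 : M * ‖h‖ ^ 2 < c * ‖h‖ ^ 2 / (2 * r) := by
          rw [lt_div_iff₀ h2r]
          nlinarith [mul_lt_mul_of_pos_right hrM (by positivity : (0:ℝ) < ‖h‖ ^ 2)]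
        rw [e1]
        linarith
      calc ρ (p + h) ≤ c * (inner ℂ ν h : ℂ).re + M * ‖h‖ ^ 2 := this
      _ < 0 := lt_of_le_of_lt hM2 hneg
    rw [hρΩ]
    exact hρz
  have hq₀mem : q₀ ∈ Ω := by
    apply hball
    rw [mem_ball, dist_self]
    exact hr
  -- the holomorphic function G and the disc function H
  set Ffun : EuclideanSpace ℂ (Fin n) → ℂ := fun w =>
    (c : ℂ) * ((innerSL ℂ ν : EuclideanSpace ℂ (Fin n) →L[ℂ] ℂ) w) + Qbf B w w / 2
    with hFfun
  have hFre : ∀ w, (Ffun w).re = c * (inner ℂ ν w : ℂ).re + (Qbf B w w).re / 2 := by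
    intro w
    rw [hFfun]
    simp only [Complex.add_re, Complex.re_ofReal_mul, innerSL_apply_apply]
    congr 1
    rw [Complex.div_re]
    norm_num [Complex.normSq]
    ring
  set Gf : EuclideanSpace ℂ (Fin n) → ℂ := fun z => Ffun (f z - p) with hGf
  -- negativity of Re G on the interior ball
  have hneg : ∀ z ∈ ball q₀ r, (Gf z).re < 0 := by
    intro z hz
    have hzΩ : z ∈ Ω := hball hz
    have hzdist : dist z p < r' := by
      calc dist z p ≤ dist z q₀ + dist q₀ p := dist_triangle _ _ _
      _ < r + r := by
          apply add_lt_add_of_lt_of_le (mem_ball.1 hz)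
          rw [hq₀, dist_eq_norm]
          have : p - r • ν - p = -(r • ν) := by abel
          rw [this, norm_neg, norm_smul, Real.norm_eq_abs, abs_of_pos hr, hν1, mul_one]
      _ = 2 * r := by ring
      _ ≤ r' := hr2r'
    have hfz : dist (f z) p < ε₀ := hr'prop z (subset_closure hzΩ) hzdist
    have hfzΩ : f z ∈ Ω := hfself hzΩ
    have hfznp : f z ≠ p := fun he => hpnΩ (he ▸ hfzΩ)
    set h : EuclideanSpace ℂ (Fin n) := f z - p with hh
    have hhnorm : ‖h‖ < ε₀ := by rwa [hh, ← dist_eq_norm]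
    have hh0 : h ≠ 0 := by
      rw [hh, sub_ne_zero]
      exact hfznp
    have hρfz : ρ (f z) < 0 := by
      have := hρΩ ▸ hfzΩ
      exact this
    have hk := key1 h hhnorm
    have : p + h = f z := by rw [hh]; abel
    rw [this] at hk
    rw [hGf, hFre]
    have hhpos : 0 < ‖h‖ := norm_pos_iff.2 hh0
    calc c * (inner ℂ ν (f z - p) : ℂ).re + (Qbf B (f z - p) (f z - p)).re / 2
        = c * (inner ℂ ν h : ℂ).re + (Qbf B h h).re / 2 := by rw [hh]
    _ ≤ ρ (f z) - δ / 2 * ‖h‖ ^ 2 := hk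
    _ < 0 := by nlinarith
  -- the disc function
  set φ : ℂ → EuclideanSpace ℂ (Fin n) := fun ζ => p - ζ • ν with hφ
  have hφmaps : ∀ ζ ∈ ball (r : ℂ) r, φ ζ ∈ ball q₀ r := by
    intro ζ hζ
    rw [mem_ball, dist_eq_norm, hφ, hq₀]
    have : p - ζ • ν - (p - r • ν) = ((r : ℂ) - ζ) • ν := by
      rw [sub_smul, Complex.coe_smul]
      abel
    rw [this, norm_smul, hν1, mul_one]
    rw [mem_ball, Complex.dist_eq] at hζ
    rw [show (r:ℂ) - ζ = -(ζ - r) by ring, norm_neg]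
    exact hζ
  set H : ℂ → ℂ := fun ζ => Gf (φ ζ) with hH
  have hφdiff : Differentiable ℂ φ := by
    apply Differentiable.const_sub
    exact differentiable_id.smul_const ν
  have hFdiff : Differentiable ℂ Ffun := fun w =>
    (hasFDerivAt_Ffun B hsymm c ν w).differentiableAt
  have hHdiff : DifferentiableOn ℂ H (ball (r : ℂ) r) := by
    have h1 : DifferentiableOn ℂ (fun ζ => f (φ ζ)) (ball (r : ℂ) r) := by
      apply hf.comp (hφdiff.differentiableOn)
      intro ζ hζ
      exact hball (hφmaps ζ hζ)
    have h2 : DifferentiableOn ℂ (fun ζ => f (φ ζ) - p) (ball (r : ℂ) r) :=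
      h1.sub (differentiableOn_const p)
    exact hFdiff.comp_differentiableOn h2
  have hHneg : ∀ ζ ∈ ball (r : ℂ) r, (H ζ).re < 0 := fun ζ hζ =>
    hneg (φ ζ) (hφmaps ζ hζ)
  -- Hopf estimate from Schwarz
  have hhopf := halfplane_hopf hr hHdiff hHneg
  set a : ℝ := (H (r : ℂ)).re with ha_def
  have ha : a < 0 := hHneg (r : ℂ) (by simp [mem_ball, hr])
  -- derivative of G along the inward normal
  set A' := A.restrictScalars ℝ with hA'
  set L0 : EuclideanSpace ℂ (Fin n) →L[ℂ] ℂ :=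
    (c : ℂ) • (innerSL ℂ ν : EuclideanSpace ℂ (Fin n) →L[ℂ] ℂ) + QbCLM B 0 with hL0
  have hGder : HasFDerivWithinAt Gf ((L0.restrictScalars ℝ).comp A') (closure Ω) p := by
    have step1 : HasFDerivWithinAt (fun z => f z - p) A' (closure Ω) p := hA.sub_const p
    have step2 : HasFDerivAt Ffun L0 0 := by
      rw [hL0]
      exact hasFDerivAt_Ffun B hsymm c ν 0
    have step2' : HasFDerivAt Ffun (L0.restrictScalars ℝ) 0 := step2.restrictScalars ℝ
    have h0 : f p - p = 0 := by rw [hfp]; abel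
    have := HasFDerivAt.comp_hasFDerivWithinAt p (h0 ▸ step2') step1
    exact this
  set ψ : ℝ → EuclideanSpace ℂ (Fin n) := fun t => p - t • ν with hψ
  have hψder : HasDerivWithinAt ψ (-ν) (Icc 0 r) 0 := by
    have : HasDerivAt ψ (-ν) 0 := by
      have h1 : HasDerivAt (fun t : ℝ => t • ν) ν 0 := by
        simpa using (hasDerivAt_id (0:ℝ)).smul_const ν
      simpa [hψ] using h1.const_sub p
    exact this.hasDerivWithinAt
  have hψmaps : MapsTo ψ (Icc 0 r) (closure Ω) := by
    intro t ht
    rcases eq_or_lt_of_le ht.1 with he | hlt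
    · rw [hψ, ← he]
      simpa using hpcl
    · apply subset_closure
      apply hball
      rw [mem_ball, dist_eq_norm, hψ, hq₀]
      have : p - t • ν - (p - r • ν) = (r - t) • ν := by
        rw [sub_smul]; abel
      rw [this, norm_smul, Real.norm_eq_abs, hν1, mul_one,
        abs_of_nonneg (by linarith [ht.2] : (0:ℝ) ≤ r - t)]
      linarith [ht.2, hlt]
  set Γ : ℝ → ℂ := fun t => Gf (ψ t) with hΓ
  have hψ0 : ψ 0 = p := by simp [hψ]
  have hΓder : HasDerivWithinAt Γ (((L0.restrictScalars ℝ).comp A') (-ν)) (Icc 0 r) 0 := by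
    have := (hψ0 ▸ hGder).comp_hasDerivWithinAt 0 hψder hψmaps
    exact this
  set d : ℂ := ((L0.restrictScalars ℝ).comp A') (-ν) with hd_def
  have hd : d = -((c : ℂ) * (inner ℂ ν (A ν) : ℂ)) := by
    rw [hd_def, hL0]
    simp only [ContinuousLinearMap.coe_comp', Function.comp_apply,
      ContinuousLinearMap.coe_restrictScalars', ContinuousLinearMap.add_apply,
      ContinuousLinearMap.smul_apply, QbCLM_apply, ContinuousLinearMap.coe_restrictScalars']
    rw [hA']
    simp only [ContinuousLinearMap.coe_restrictScalars', map_neg]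
    rw [Qbf_zero_left]
    simp only [innerSL_apply_apply, smul_eq_mul, add_zero]
    ring
  have hΓ0 : Γ 0 = 0 := by
    show Ffun (f (ψ 0) - p) = 0
    rw [hψ0, hfp]
    show (c : ℂ) * ((innerSL ℂ ν : EuclideanSpace ℂ (Fin n) →L[ℂ] ℂ) (p - p))
      + Qbf B (p - p) (p - p) / 2 = 0
    simp [Qbf_zero_left]
  -- pass to the limit of the slopes
  have htend : Tendsto (slope Γ 0) (nhdsWithin 0 (Icc 0 r \ {0})) (nhds d) := by
    rw [← hasDerivWithinAt_iff_tendsto_slope]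
    exact hΓder
  have hmono : nhdsWithin (0:ℝ) (Ioo 0 r) ≤ nhdsWithin 0 (Icc 0 r \ {0}) := by
    apply nhdsWithin_mono
    intro t ht
    exact ⟨⟨ht.1.le, ht.2.le⟩, ne_of_gt ht.1⟩
  have hnebot : (nhdsWithin (0:ℝ) (Ioo 0 r)).NeBot := by
    rw [← mem_closure_iff_nhdsWithin_neBot, closure_Ioo hr.ne]
    exact ⟨le_rfl, hr.le⟩
  have htend' : Tendsto (fun t => (slope Γ 0 t).re) (nhdsWithin (0:ℝ) (Ioo 0 r))
      (nhds d.re) :=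
    (Complex.continuous_re.continuousAt.tendsto).comp (htend.mono_left hmono)
  have hbound : ∀ t ∈ Ioo (0:ℝ) r, (slope Γ 0 t).re ≤ a / (4 * r) := by
    intro t ht
    have hslope : slope Γ 0 t = t⁻¹ • Γ t := by
      rw [slope_def_module, hΓ0, sub_zero, sub_zero]
    have hΓH : Γ t = H (t : ℂ) := by
      show Gf (p - t • ν) = Gf (p - (t : ℂ) • ν)
      rw [Complex.coe_smul]
    have hHt := hhopf t ht
    rw [hslope, Complex.real_smul, Complex.re_ofReal_mul, hΓH]
    have h2 : (H (t:ℂ)).re ≤ a / (4 * r) * t := hHt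
    have htpos : 0 < t := ht.1
    calc t⁻¹ * (H (t:ℂ)).re ≤ t⁻¹ * (a / (4 * r) * t) := by
          apply mul_le_mul_of_nonneg_left h2 (inv_nonneg.2 htpos.le)
    _ = a / (4 * r) := by field_simp
  have hdre : d.re ≤ a / (4 * r) := by
    apply le_of_tendsto htend'
    filter_upwards [self_mem_nhdsWithin] with t ht
    exact hbound t ht
  have hdre2 : d.re = -(c * (inner ℂ ν (A ν) : ℂ).re) := by
    rw [hd]
    simp [Complex.re_ofReal_mul]
  have hfinal : 0 < (inner ℂ ν (A ν) : ℂ).re := by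
    rw [hdre2] at hdre
    have h1 : 0 < -(a / (4 * r)) := by
      apply neg_pos.2
      apply div_neg_of_neg_of_pos ha
      linarith
    have h2 : 0 < c * (inner ℂ ν (A ν) : ℂ).re := by linarith
    by_contra hcon
    push_neg at hcon
    nlinarith
  constructor
  · rw [hνc (A ν)]
    have : (inner ℂ (A ν) ν : ℂ).re = (inner ℂ ν (A ν) : ℂ).re := by
      rw [← inner_conj_symm ν (A ν)]
      rw [Complex.conj_re]
    rw [this]
    exact mul_pos hc hfinal
  · exact hfinal
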